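/- Let G be a locally finite connected simple graph on a countable vertex set V with maximum degree Δ, 2 ≤ Δ < ∞. Let S, T be countable discrete spaces and U a measurable space; let φ : T^V → S^V and φ' : U^V → T^V be measurable (with respect to the product σ-algebras), and let Z be a U^V-valued random variable on a probability space (Ω, 𝓕, P). Suppose there exist constants C, c, c' > 0 such that for all v ∈ V and all integers r ≥ 0, P(R_v(φ, φ'(Z)) > r) ≤ C e^{−c r} and P(R_v(φ', Z) > r) ≤ C e^{−c' r}. Then there exist constants C'', c'' > 0 such that for all v ∈ V and all r ≥ 0, P(R_v(φ ∘ φ', Z) > r) ≤ C'' e^{−c'' r}. -/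

import Mathlib

open MeasureTheory

/-- The coding radius of `φ : T^V → S^V` at `y ∈ T^V` and `v ∈ V` (with respect to the
graph metric of `G`): the least `r ∈ ℕ ∪ {∞}` such that `φ y' v = φ y v` for every `y'`
agreeing with `y` on the ball `B(v, r)`; it is `∞` if no such `r` exists. -/
noncomputable def codingRadius {V T S : Type*} (G : SimpleGraph V)
    (φ : (V → T) → V → S) (y : V → T) (v : V) : ℕ∞ :=
  sInf {r : ℕ∞ | ∃ n : ℕ, r = (n : ℕ∞) ∧
    ∀ y' : V → T, (∀ u : V, G.dist u v ≤ n → y' u = y u) → φ y' v = φ y v}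

lemma cr_le_iff {V T S : Type*} (G : SimpleGraph V) (φ : (V → T) → V → S)
    (y : V → T) (v : V) (k : ℕ) :
    codingRadius G φ y v ≤ (k : ℕ∞) ↔
      ∀ y' : V → T, (∀ u : V, G.dist u v ≤ k → y' u = y u) → φ y' v = φ y v := by
  constructor
  · intro h
    by_contra hP
    push_neg at hP
    have h1 : (k : ℕ∞) + 1 ≤ codingRadius G φ y v := by
      apply le_sInf
      rintro x ⟨n, rfl, hn⟩
      by_cases hnk : n ≤ k
      · exfalso
        obtain ⟨y', hy', hne⟩ := hP
        exact hne (hn y' (fun u hu => hy' u (hu.trans hnk)))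
      · push_neg at hnk
        exact_mod_cast hnk
    have hlt : (k : ℕ∞) < codingRadius G φ y v := by
      refine lt_of_lt_of_le ?_ h1
      exact_mod_cast Nat.lt_succ_self k
    exact absurd h (not_le.mpr hlt)
  · intro h
    exact sInf_le ⟨k, rfl, h⟩

lemma ball_cover {V : Type*} (G : SimpleGraph V) (hconn : G.Connected) [G.LocallyFinite]
    (Δ : ℕ) (hdeg : ∀ v : V, G.degree v ≤ Δ) (v : V) :
    ∀ n : ℕ, ∃ s : Finset V, (∀ u : V, G.dist u v ≤ n → u ∈ s) ∧ s.card ≤ (Δ + 1) ^ n := by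
  classical
  intro n
  induction n with
  | zero =>
    refine ⟨{v}, fun u hu => ?_, by simp⟩
    have h0 : G.dist u v = 0 := Nat.le_zero.mp hu
    have : u = v := (hconn.dist_eq_zero_iff).mp h0
    simp [this]
  | succ n ih =>
    obtain ⟨s, hs, hcard⟩ := ih
    refine ⟨s.biUnion (fun w => insert w (G.neighborFinset w)), ?_, ?_⟩
    · intro u hu
      by_cases h : G.dist u v ≤ n
      · exact Finset.mem_biUnion.mpr ⟨u, hs u h, Finset.mem_insert_self _ _⟩
      · push_neg at h
        have hd : G.dist u v = n + 1 := le_antisymm hu h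
        obtain ⟨p, hp⟩ := (hconn u v).exists_walk_length_eq_dist
        rw [hd] at hp
        cases p with
        | nil => simp at hp
        | @cons _ w _ hadj q =>
          have hq : q.length = n := by simpa using hp
          have hw : G.dist w v ≤ n := hq ▸ SimpleGraph.dist_le q
          refine Finset.mem_biUnion.mpr ⟨w, hs w hw, ?_⟩
          exact Finset.mem_insert.mpr (Or.inr ((G.mem_neighborFinset w u).mpr hadj.symm))
    · calc (s.biUnion (fun w => insert w (G.neighborFinset w))).card
          ≤ ∑ w ∈ s, (insert w (G.neighborFinset w)).card := Finset.card_biUnion_le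
        _ ≤ ∑ w ∈ s, (Δ + 1) := by
            refine Finset.sum_le_sum fun w _ => ?_
            calc (insert w (G.neighborFinset w)).card ≤ (G.neighborFinset w).card + 1 :=
                  Finset.card_insert_le _ _
              _ ≤ Δ + 1 := by
                  have := hdeg w
                  rw [SimpleGraph.card_neighborFinset_eq_degree]
                  omega
        _ = s.card * (Δ + 1) := by simp [Finset.sum_const, mul_comm]
        _ ≤ (Δ + 1) ^ n * (Δ + 1) := Nat.mul_le_mul_right _ hcard
        _ = (Δ + 1) ^ (n + 1) := (pow_succ _ _).symm

/-- Composition of finitary codings with exponential tails on the coding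
radius again has exponential tails: if `P(R_v(φ, φ'(Z)) > r) ≤ C e^{-c r}` and
`P(R_v(φ', Z) > r) ≤ C e^{-c' r}` for all `v ∈ V` and `r ≥ 0`, on a graph of maximum
degree `Δ` with `2 ≤ Δ < ∞`, then there are `C'', c'' > 0` such that
`P(R_v(φ ∘ φ', Z) > r) ≤ C'' e^{-c'' r}` for all `v` and `r`. -/
theorem stmt11 {V T S U : Type*} [Countable V] [Countable T] [Countable S]
    [MeasurableSpace T] [MeasurableSingletonClass T]
    [MeasurableSpace S] [MeasurableSingletonClass S]
    [MeasurableSpace U]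
    (G : SimpleGraph V) (hconn : G.Connected) [G.LocallyFinite]
    (Δ : ℕ) (hΔ2 : 2 ≤ Δ) (hdeg : ∀ v : V, G.degree v ≤ Δ)
    {Ω : Type*} [MeasurableSpace Ω] (P : Measure Ω) [IsProbabilityMeasure P]
    (φ : (V → T) → V → S) (φ' : (V → U) → V → T)
    (hφ : Measurable φ) (hφ' : Measurable φ')
    (Z : Ω → V → U) (hZ : Measurable Z)
    (C c c' : ℝ) (hC : 0 < C) (hc : 0 < c) (hc' : 0 < c')
    (hbound1 : ∀ (v : V) (r : ℕ),
      (P {ω | (r : ℕ∞) < codingRadius G φ (φ' (Z ω)) v}).toReal ≤ C * Real.exp (-c * r))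
    (hbound2 : ∀ (v : V) (r : ℕ),
      (P {ω | (r : ℕ∞) < codingRadius G φ' (Z ω) v}).toReal ≤ C * Real.exp (-c' * r)) :
    ∃ C'' c'' : ℝ, 0 < C'' ∧ 0 < c'' ∧ ∀ (v : V) (r : ℕ),
      (P {ω | (r : ℕ∞) < codingRadius G (φ ∘ φ') (Z ω) v}).toReal
        ≤ C'' * Real.exp (-c'' * r) := by
  classical
  set L : ℝ := Real.log ((Δ : ℝ) + 1) with hLdef
  have hΔ1 : (1 : ℝ) ≤ (Δ : ℝ) + 1 := by
    have : (0:ℝ) ≤ (Δ:ℝ) := Nat.cast_nonneg Δ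
    linarith
  have hL0 : 0 ≤ L := Real.log_nonneg hΔ1
  set N : ℕ := 2 + Nat.ceil (L / c') with hNdef
  have hN2 : 2 ≤ N := Nat.le_add_right 2 _
  have hNpos : (0 : ℝ) < N := by
    have : 0 < N := by omega
    exact_mod_cast this
  have hNL : L < c' * ((N : ℝ) - 1) := by
    have h1 : L / c' ≤ (Nat.ceil (L / c') : ℝ) := Nat.le_ceil _
    have h2 : (N : ℝ) = 2 + (Nat.ceil (L / c') : ℝ) := by
      rw [hNdef]; push_cast; ring
    have h3 : L = c' * (L / c') := by field_simp
    nlinarith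
  set δ : ℝ := (c' * ((N : ℝ) - 1) - L) / N with hδdef
  have hδ : 0 < δ := div_pos (by linarith) hNpos
  set c'' : ℝ := min (c / N) δ with hc''def
  have hc''pos : 0 < c'' := lt_min (div_pos hc hNpos) hδ
  refine ⟨C * Real.exp c + C, c'', by positivity, hc''pos, fun v r => ?_⟩
  set k : ℕ := r / N with hkdef
  have hkr : k ≤ r := Nat.div_le_self r N
  obtain ⟨s, hs, hscard⟩ := ball_cover G hconn Δ hdeg v k
  set A : Set Ω := {ω | (k : ℕ∞) < codingRadius G φ (φ' (Z ω)) v} with hAdef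
  set B : V → Set Ω := fun u => {ω | ((r - k : ℕ) : ℕ∞) < codingRadius G φ' (Z ω) u} with hBdef
  -- inclusion of events
  have hsub : {ω | (r : ℕ∞) < codingRadius G (φ ∘ φ') (Z ω) v} ⊆ A ∪ ⋃ u ∈ s, B u := by
    intro ω hω
    by_contra hmem
    simp only [hAdef, hBdef, Set.mem_union, Set.mem_iUnion, Set.mem_setOf_eq, not_or,
      not_exists, not_lt] at hmem
    obtain ⟨hA, hB⟩ := hmem
    have hle : codingRadius G (φ ∘ φ') (Z ω) v ≤ (r : ℕ∞) := by
      rw [cr_le_iff]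
      intro z' hz'
      show φ (φ' z') v = φ (φ' (Z ω)) v
      apply (cr_le_iff G φ (φ' (Z ω)) v k).mp hA
      intro u hu
      apply (cr_le_iff G φ' (Z ω) u (r - k)).mp (hB u (hs u hu))
      intro x hx
      apply hz'
      calc G.dist x v ≤ G.dist x u + G.dist u v := hconn.dist_triangle
        _ ≤ (r - k) + k := add_le_add hx hu
        _ = r := Nat.sub_add_cancel hkr
    exact absurd hω (not_lt.mpr hle)
  -- measure bound
  have hstep : (P {ω | (r : ℕ∞) < codingRadius G (φ ∘ φ') (Z ω) v}).toReal
      ≤ C * Real.exp (-c * k)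
        + (((Δ + 1) ^ k : ℕ) : ℝ) * (C * Real.exp (-c' * ((r - k : ℕ) : ℝ))) := by
    have h1 : P {ω | (r : ℕ∞) < codingRadius G (φ ∘ φ') (Z ω) v}
        ≤ P A + ∑ u ∈ s, P (B u) := by
      calc P {ω | (r : ℕ∞) < codingRadius G (φ ∘ φ') (Z ω) v}
          ≤ P (A ∪ ⋃ u ∈ s, B u) := measure_mono hsub
        _ ≤ P A + P (⋃ u ∈ s, B u) := measure_union_le _ _
        _ ≤ P A + ∑ u ∈ s, P (B u) :=
            add_le_add le_rfl (measure_biUnion_finset_le s B)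
    have hfin : P A + ∑ u ∈ s, P (B u) ≠ ⊤ := by
      refine ENNReal.add_ne_top.mpr ⟨measure_ne_top _ _, ?_⟩
      exact (ENNReal.sum_lt_top.mpr fun u _ => measure_lt_top _ _).ne
    calc (P {ω | (r : ℕ∞) < codingRadius G (φ ∘ φ') (Z ω) v}).toReal
        ≤ (P A + ∑ u ∈ s, P (B u)).toReal := ENNReal.toReal_mono hfin h1
      _ = (P A).toReal + ∑ u ∈ s, (P (B u)).toReal := by
          rw [ENNReal.toReal_add (measure_ne_top _ _)
            (ENNReal.sum_lt_top.mpr fun u _ => measure_lt_top _ _).ne,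
            ENNReal.toReal_sum fun u _ => measure_ne_top _ _]
      _ ≤ C * Real.exp (-c * k) + ∑ u ∈ s, C * Real.exp (-c' * ((r - k : ℕ) : ℝ)) :=
          add_le_add (hbound1 v k) (Finset.sum_le_sum fun u _ => hbound2 u (r - k))
      _ = C * Real.exp (-c * k) + (s.card : ℝ) * (C * Real.exp (-c' * ((r - k : ℕ) : ℝ))) := by
          rw [Finset.sum_const, nsmul_eq_mul]
      _ ≤ C * Real.exp (-c * k)
          + (((Δ + 1) ^ k : ℕ) : ℝ) * (C * Real.exp (-c' * ((r - k : ℕ) : ℝ))) := by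
          gcongr

  refine hstep.trans ?_
  -- arithmetic facts
  have hk1 : (k : ℝ) * N ≤ r := by exact_mod_cast Nat.div_mul_le_self r N
  have hk2 : (r : ℝ) < ((k : ℝ) + 1) * N := by
    have hm : N * k + r % N = r := by rw [hkdef]; exact Nat.div_add_mod r N
    have hlt : r % N < N := Nat.mod_lt r (by omega)
    have hmr : (N : ℝ) * k + ((r % N : ℕ) : ℝ) = r := by exact_mod_cast hm
    have hltr : ((r % N : ℕ) : ℝ) < N := by exact_mod_cast hlt
    nlinarith
  have hrk : ((r - k : ℕ) : ℝ) = (r : ℝ) - k := by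
    push_cast [Nat.cast_sub hkr]; ring
  have hpow : (((Δ + 1) ^ k : ℕ) : ℝ) = Real.exp ((k : ℝ) * L) := by
    have hexp : Real.exp L = (Δ : ℝ) + 1 := Real.exp_log (by positivity)
    push_cast
    rw [← hexp, ← Real.exp_nat_mul]
  have hδN : δ * N = c' * ((N : ℝ) - 1) - L := by
    rw [hδdef]; field_simp
  have hr0 : (0 : ℝ) ≤ r := Nat.cast_nonneg r
  have hk0 : (0 : ℝ) ≤ k := Nat.cast_nonneg k
  have hcN : c'' ≤ c / N := min_le_left _ _
  have hcδ : c'' ≤ δ := min_le_right _ _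
  -- term 1
  have ht1 : C * Real.exp (-c * k) ≤ C * Real.exp c * Real.exp (-c'' * r) := by
    rw [mul_assoc, ← Real.exp_add]
    apply mul_le_mul_of_nonneg_left _ hC.le
    apply Real.exp_le_exp.mpr
    have h1 : c'' * r ≤ (c / N) * r := mul_le_mul_of_nonneg_right hcN hr0
    have h2 : (c / N) * r ≤ c * ((k : ℝ) + 1) := by
      rw [div_mul_eq_mul_div, div_le_iff₀ hNpos]
      nlinarith
    have h5 : c * ((k : ℝ) + 1) = c * k + c := by ring
    linarith
  -- term 2
  have ht2 : (((Δ + 1) ^ k : ℕ) : ℝ) * (C * Real.exp (-c' * ((r - k : ℕ) : ℝ)))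
      ≤ C * Real.exp (-c'' * r) := by
    rw [hpow, hrk, mul_comm, mul_assoc, ← Real.exp_add]
    apply mul_le_mul_of_nonneg_left _ hC.le
    apply Real.exp_le_exp.mpr
    have h1 : c'' * r ≤ δ * r := mul_le_mul_of_nonneg_right hcδ hr0
    have h2 : (k : ℝ) * (L + c') ≤ ((r : ℝ) / N) * (L + c') := by
      apply mul_le_mul_of_nonneg_right _ (by linarith)
      rw [le_div_iff₀ hNpos]; linarith
    have h3 : ((r : ℝ) / N) * (L + c') - c' * r = -(δ * r) := by
      rw [hδdef]; field_simp; ring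
    have h4 : -c' * ((r : ℝ) - k) + (k : ℝ) * L = (k : ℝ) * (L + c') - c' * r := by ring
    linarith
  linarith
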